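/- Suppose the partitions (P_N) are quasi-uniform and H ∈ (0,1). For l ∈ {0,1} and each N, let μ_N^{(l)} be the Gaussian measure on ℝ^N with mean zero and covariance matrix ( k_{l,H}(x_{N,i}, x_{N,j}) )_{i,j=1}^{N}. Then the expectation of σ̂_ICV²(N), regarded as a function of the data vector (f_1, …, f_N), under μ_N^{(l)} satisfies E σ̂_ICV²(N) = Θ(N^{1−2H}) if l = 0 and E σ̂_ICV²(N) = Θ(N^{−1−2H}) if l = 1. -/

import Mathlib

open Filter Asymptotics Finset MeasureTheory ProbabilityTheory

/-- `Δx_{N,n} = x_{N,n+1} - x_{N,n}`. -/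
noncomputable def deltaX (pts : ℕ → ℕ → ℝ) (N n : ℕ) : ℝ := pts N (n + 1) - pts N n

/-- Extension of a data vector `(f_1, …, f_N) ∈ ℝ^N` to indices `0, 1, …, N` with `f_0 = 0`. -/
def vecExt (N : ℕ) (v : Fin N → ℝ) (n : ℕ) : ℝ :=
  if h : 1 ≤ n ∧ n ≤ N then v ⟨n - 1, by omega⟩ else 0

/-- The interior cross-validation scale estimator `σ̂_ICV²(N)` as a function of the data vector
`(f_1, …, f_N) ∈ ℝ^N`. -/
noncomputable def sigmaICVvec (pts : ℕ → ℕ → ℝ) (N : ℕ) (v : Fin N → ℝ) : ℝ :=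
  (1 / (N : ℝ)) *
    ∑ n ∈ Finset.Icc 2 (N - 1),
      (deltaX pts N (n - 1) * (vecExt N v (n + 1) - vecExt N v n) -
          deltaX pts N n * (vecExt N v n - vecExt N v (n - 1))) ^ 2 /
        ((deltaX pts N n + deltaX pts N (n - 1)) * deltaX pts N n * deltaX pts N (n - 1))

/-- The fractional Brownian motion kernel `k_{0,H}`. -/
noncomputable def kFBM (H x y : ℝ) : ℝ := (x ^ (2 * H) + y ^ (2 * H) - |x - y| ^ (2 * H)) / 2

/-- The integrated fractional Brownian motion kernel `k_{1,H}`. -/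
noncomputable def kIFBM (H x y : ℝ) : ℝ :=
  (1 / (2 * (2 * H + 1))) *
    (y * x ^ (2 * H + 1) + x * y ^ (2 * H + 1) -
      (1 / (2 * (H + 1))) * (x ^ (2 * H + 2) + y ^ (2 * H + 2) - |x - y| ^ (2 * H + 2)))

section AuxICV

open Real

/-- core lower bound, case `x ≤ y`, exponent `γ < 1`. -/
lemma bracket0_lb_aux {γ x y : ℝ} (hγ : γ < 1) (hx : 0 < x) (hy : 0 < y) (hxy : x ≤ y) :
    (2 ^ (1 - γ) - 1) * x * (x + y) ^ (γ - 1) ≤ x ^ γ + y ^ γ - (x + y) ^ γ := by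
  have hxy0 : 0 < x + y := by linarith
  have hsplit : ∀ z : ℝ, 0 < z → z ^ γ = z ^ (γ - 1) * z := by
    intro z hz
    rw [show z ^ γ = z ^ ((γ - 1) + 1) from by ring_nf, Real.rpow_add_one hz.ne']
  have hyterm : (x + y) ^ (γ - 1) ≤ y ^ (γ - 1) :=
    Real.rpow_le_rpow_of_nonpos hy (by linarith) (by linarith)
  have hxterm : ((x + y) / 2) ^ (γ - 1) ≤ x ^ (γ - 1) :=
    Real.rpow_le_rpow_of_nonpos hx (by linarith) (by linarith)
  have hhalf : ((x + y) / 2) ^ (γ - 1) = (x + y) ^ (γ - 1) * 2 ^ (1 - γ) := by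
    rw [Real.div_rpow hxy0.le (by norm_num), show (1 - γ) = -(γ-1) by ring,
      Real.rpow_neg (by norm_num), div_eq_mul_inv]
  rw [hsplit x hx, hsplit y hy, hsplit (x+y) hxy0]
  nlinarith [hhalf ▸ hxterm, mul_le_mul_of_nonneg_left hyterm hy.le,
    mul_le_mul_of_nonneg_left (hhalf ▸ hxterm) hx.le]

/-- lower bound for `x^γ + y^γ - (x+y)^γ`, `γ < 1`. -/
lemma bracket0_lb {γ x y hmin hmax : ℝ} (hγ : γ < 1) (h0 : 0 < hmin)
    (hx : hmin ≤ x) (hy : hmin ≤ y) (hx' : x ≤ hmax) (hy' : y ≤ hmax) :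
    (2 ^ (1 - γ) - 1) * hmin * (2 * hmax) ^ (γ - 1) ≤ x ^ γ + y ^ γ - (x + y) ^ γ := by
  have hxp : 0 < x := lt_of_lt_of_le h0 hx
  have hyp : 0 < y := lt_of_lt_of_le h0 hy
  have hc : (0:ℝ) < 2 ^ (1 - γ) - 1 := by
    have : (1:ℝ) < 2 ^ (1 - γ) := by
      calc (1:ℝ) = 2 ^ (0:ℝ) := by simp
      _ < 2 ^ (1 - γ) := Real.rpow_lt_rpow_of_exponent_lt one_lt_two (by linarith)
    linarith
  have hmm : (2 * hmax) ^ (γ - 1) ≤ (x + y) ^ (γ - 1) :=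
    Real.rpow_le_rpow_of_nonpos (by linarith) (by linarith) (by linarith)
  rcases le_total x y with h | h
  · calc (2 ^ (1 - γ) - 1) * hmin * (2 * hmax) ^ (γ - 1)
        ≤ (2 ^ (1 - γ) - 1) * x * (x + y) ^ (γ - 1) := by
          apply mul_le_mul (mul_le_mul_of_nonneg_left hx hc.le) hmm
            (Real.rpow_nonneg (by linarith) _) (by positivity)
      _ ≤ x ^ γ + y ^ γ - (x + y) ^ γ := bracket0_lb_aux hγ hxp hyp h
  · calc (2 ^ (1 - γ) - 1) * hmin * (2 * hmax) ^ (γ - 1)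
        ≤ (2 ^ (1 - γ) - 1) * y * (y + x) ^ (γ - 1) := by
          apply mul_le_mul (mul_le_mul_of_nonneg_left hy hc.le) (by rwa [add_comm y x])
            (Real.rpow_nonneg (by linarith) _) (by positivity)
      _ ≤ y ^ γ + x ^ γ - (y + x) ^ γ := bracket0_lb_aux hγ hyp hxp h
      _ = x ^ γ + y ^ γ - (x + y) ^ γ := by rw [add_comm y x]; ring

lemma rpow_le_of_mem {γ x hmin hmax : ℝ} (h0 : 0 < hmin) (hx : hmin ≤ x) (hx' : x ≤ hmax) :
    x ^ γ ≤ hmin ^ γ + hmax ^ γ := by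
  rcases le_total 0 γ with h | h
  · have := Real.rpow_le_rpow (by linarith : (0:ℝ) ≤ x) hx' h
    have h2 : 0 ≤ hmin ^ γ := Real.rpow_nonneg h0.le _
    linarith
  · have := Real.rpow_le_rpow_of_nonpos h0 hx h
    have h2 : 0 ≤ hmax ^ γ := Real.rpow_nonneg (by linarith) _
    linarith

lemma bracket0_ub {γ x y hmin hmax : ℝ} (h0 : 0 < hmin)
    (hx : hmin ≤ x) (hy : hmin ≤ y) (hx' : x ≤ hmax) (hy' : y ≤ hmax) :
    x ^ γ + y ^ γ - (x + y) ^ γ ≤ 2 * (hmin ^ γ + hmax ^ γ) := by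
  have h1 := rpow_le_of_mem (γ := γ) h0 hx hx'
  have h2 := rpow_le_of_mem (γ := γ) h0 hy hy'
  have h3 : 0 ≤ (x + y) ^ γ := Real.rpow_nonneg (by linarith) _
  linarith

lemma bracket1_lb_aux {δ x y : ℝ} (hδ : 1 < δ) (hx : 0 < x) (hy : 0 < y) (hxy : x ≤ y) :
    (1 - 2 ^ (1 - δ)) * x * (x + y) ^ (δ - 1) ≤ (x + y) ^ δ - x ^ δ - y ^ δ := by
  have hxy0 : 0 < x + y := by linarith
  have hsplit : ∀ z : ℝ, 0 < z → z ^ δ = z ^ (δ - 1) * z := by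
    intro z hz
    rw [show z ^ δ = z ^ ((δ - 1) + 1) from by ring_nf, Real.rpow_add_one hz.ne']
  have hyterm : y ^ (δ - 1) ≤ (x + y) ^ (δ - 1) :=
    Real.rpow_le_rpow hy.le (by linarith) (by linarith)
  have hxterm : x ^ (δ - 1) ≤ ((x + y) / 2) ^ (δ - 1) :=
    Real.rpow_le_rpow hx.le (by linarith) (by linarith)
  have hhalf : ((x + y) / 2) ^ (δ - 1) = (x + y) ^ (δ - 1) * 2 ^ (1 - δ) := by
    rw [Real.div_rpow hxy0.le (by norm_num), show (1 - δ) = -(δ-1) by ring,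
      Real.rpow_neg (by norm_num), div_eq_mul_inv]
  rw [hsplit x hx, hsplit y hy, hsplit (x+y) hxy0]
  nlinarith [mul_le_mul_of_nonneg_left hyterm hy.le,
    mul_le_mul_of_nonneg_left (hhalf ▸ hxterm) hx.le]

lemma bracket1_lb {δ x y hmin : ℝ} (hδ : 1 < δ) (h0 : 0 < hmin)
    (hx : hmin ≤ x) (hy : hmin ≤ y) :
    (1 - 2 ^ (1 - δ)) * hmin * (2 * hmin) ^ (δ - 1) ≤ (x + y) ^ δ - x ^ δ - y ^ δ := by
  have hxp : 0 < x := lt_of_lt_of_le h0 hx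
  have hyp : 0 < y := lt_of_lt_of_le h0 hy
  have hc : (0:ℝ) < 1 - 2 ^ (1 - δ) := by
    have : (2:ℝ) ^ (1 - δ) < 1 := by
      calc (2:ℝ) ^ (1 - δ) < 2 ^ (0:ℝ) := Real.rpow_lt_rpow_of_exponent_lt one_lt_two (by linarith)
      _ = 1 := by simp
    linarith
  have hmm : (2 * hmin) ^ (δ - 1) ≤ (x + y) ^ (δ - 1) :=
    Real.rpow_le_rpow (by linarith) (by linarith) (by linarith)
  rcases le_total x y with h | h
  · calc (1 - 2 ^ (1 - δ)) * hmin * (2 * hmin) ^ (δ - 1)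
        ≤ (1 - 2 ^ (1 - δ)) * x * (x + y) ^ (δ - 1) := by
          apply mul_le_mul (mul_le_mul_of_nonneg_left hx hc.le) hmm
            (Real.rpow_nonneg (by linarith) _) (by positivity)
      _ ≤ (x + y) ^ δ - x ^ δ - y ^ δ := bracket1_lb_aux hδ hxp hyp h
  · calc (1 - 2 ^ (1 - δ)) * hmin * (2 * hmin) ^ (δ - 1)
        ≤ (1 - 2 ^ (1 - δ)) * y * (y + x) ^ (δ - 1) := by
          apply mul_le_mul (mul_le_mul_of_nonneg_left hy hc.le) (by rwa [add_comm y x])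
            (Real.rpow_nonneg (by linarith) _) (by positivity)
      _ ≤ (y + x) ^ δ - y ^ δ - x ^ δ := bracket1_lb_aux hδ hyp hxp h
      _ = (x + y) ^ δ - x ^ δ - y ^ δ := by rw [add_comm y x]; ring

lemma bracket1_ub {δ x y hmax : ℝ} (hδ : 0 ≤ δ) (hx : 0 ≤ x) (hy : 0 ≤ y)
    (hx' : x ≤ hmax) (hy' : y ≤ hmax) :
    (x + y) ^ δ - x ^ δ - y ^ δ ≤ (2 * hmax) ^ δ := by
  have h1 : (x + y) ^ δ ≤ (2 * hmax) ^ δ :=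
    Real.rpow_le_rpow (by linarith) (by linarith) hδ
  have h2 : 0 ≤ x ^ δ := Real.rpow_nonneg hx _
  have h3 : 0 ≤ y ^ δ := Real.rpow_nonneg hy _
  linarith


open MeasureTheory ProbabilityTheory Real
open scoped NNReal ENNReal

lemma integrable_sq_gaussian_one : Integrable (fun x : ℝ => x ^ 2) (gaussianReal 0 1) := by
  rw [gaussianReal_of_var_ne_zero 0 one_ne_zero,
    integrable_withDensity_iff (measurable_gaussianPDF 0 1)
      (Filter.Eventually.of_forall fun x => ENNReal.ofReal_lt_top)]
  have base := integrable_rpow_mul_exp_neg_mul_sq (b := 2⁻¹) (by norm_num) (s := 2) (by norm_num)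
  simp_rw [show (2:ℝ) = ((2:ℕ):ℝ) by norm_num, Real.rpow_natCast] at base
  have h : ∀ x : ℝ, x ^ 2 * (gaussianPDF 0 1 x).toReal
      = (Real.sqrt (2 * Real.pi))⁻¹ * (x ^ (2:ℕ) * Real.exp (-2⁻¹ * x ^ 2)) := by
    intro x
    rw [gaussianPDF, ENNReal.toReal_ofReal (gaussianPDFReal_nonneg 0 1 x), gaussianPDFReal]
    norm_num
    ring_nf
  simp_rw [h]
  exact (base.const_mul _)

lemma gaussianReal_eq_map (V : ℝ≥0) :
    gaussianReal 0 V = (gaussianReal 0 1).map (fun x => Real.sqrt V * x) := by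
  have h := gaussianReal_map_const_mul (μ := 0) (v := 1) (Real.sqrt V)
  rw [h]
  congr 1
  · ring
  · ext
    simp [Real.sq_sqrt V.coe_nonneg]

lemma integrable_sq_gaussian (V : ℝ≥0) : Integrable (fun x : ℝ => x ^ 2) (gaussianReal 0 V) := by
  rw [gaussianReal_eq_map,
    integrable_map_measure (by fun_prop) (by fun_prop)]
  have : ((fun x : ℝ => x ^ 2) ∘ fun x : ℝ => Real.sqrt V * x)
      = fun x : ℝ => (Real.sqrt V) ^ 2 * x ^ 2 := by ext x; simp [mul_pow]
  rw [this]
  exact integrable_sq_gaussian_one.const_mul _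

lemma integral_sq_gaussian (V : ℝ≥0) :
    ∫ x, x ^ 2 ∂(gaussianReal 0 V) = (∫ x, x ^ 2 ∂(gaussianReal 0 1)) * V := by
  rw [gaussianReal_eq_map, integral_map (by fun_prop) (by fun_prop)]
  have : ∀ x : ℝ, (Real.sqrt V * x) ^ 2 = (V : ℝ) * x ^ 2 := by
    intro x; rw [mul_pow, Real.sq_sqrt V.coe_nonneg]
  simp_rw [this]
  rw [integral_const_mul]
  ring

lemma gaussian_M_pos : 0 < ∫ x, x ^ 2 ∂(gaussianReal 0 1) := by
  rcases (integral_nonneg (f := fun x : ℝ => x ^ 2) (fun x => sq_nonneg x)).lt_or_eq with h | h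
  · exact h
  exfalso
  have h0 : (fun x : ℝ => x ^ 2) =ᵐ[gaussianReal 0 1] 0 := by
    rw [← integral_eq_zero_iff_of_nonneg (fun x => sq_nonneg x) integrable_sq_gaussian_one]
    exact h.symm
  have hnull : gaussianReal 0 1 {x : ℝ | x ^ 2 ≠ 0} = 0 := by
    have := h0
    rw [Filter.EventuallyEq, ae_iff] at this
    simpa using this
  have hset : {x : ℝ | x ^ 2 ≠ 0} = {(0:ℝ)}ᶜ := by
    ext x; simp [pow_eq_zero_iff]
  have habs := gaussianReal_absolutelyContinuous' 0 one_ne_zero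
  have hvol : (volume : Measure ℝ) {(0:ℝ)}ᶜ = 0 := habs (hset ▸ hnull)
  have hsub : (Set.Ioi (0:ℝ)) ⊆ {(0:ℝ)}ᶜ := fun x hx => by
    simp only [Set.mem_compl_iff, Set.mem_singleton_iff]
    exact ne_of_gt hx
  have := measure_mono_null hsub hvol
  rw [Real.volume_Ioi] at this
  exact ENNReal.top_ne_zero this

open MeasureTheory ProbabilityTheory Finset
open scoped NNReal

section
variable {N : ℕ} (i₀ i₁ i₂ : Fin N) (c₀ c₁ c₂ : ℝ)

/-- the three-point coefficient vector -/
noncomputable def coefv (i₀ i₁ i₂ : Fin N) (c₀ c₁ c₂ : ℝ) : Fin N → ℝ :=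
  fun i => (if i = i₀ then c₀ else 0) + (if i = i₁ then c₁ else 0) + (if i = i₂ then c₂ else 0)

lemma coefv_sum (v : Fin N → ℝ) :
    ∑ i, coefv i₀ i₁ i₂ c₀ c₁ c₂ i * v i = c₀ * v i₀ + c₁ * v i₁ + c₂ * v i₂ := by
  simp [coefv, add_mul, Finset.sum_add_distrib, ite_mul, Finset.sum_ite_eq']

lemma coefv_quadform (F : Fin N → Fin N → ℝ) :
    ∑ i, ∑ j, coefv i₀ i₁ i₂ c₀ c₁ c₂ i * coefv i₀ i₁ i₂ c₀ c₁ c₂ j * F i j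
      = c₀ * c₀ * F i₀ i₀ + c₀ * c₁ * F i₀ i₁ + c₀ * c₂ * F i₀ i₂
      + c₁ * c₀ * F i₁ i₀ + c₁ * c₁ * F i₁ i₁ + c₁ * c₂ * F i₁ i₂
      + c₂ * c₀ * F i₂ i₀ + c₂ * c₁ * F i₂ i₁ + c₂ * c₂ * F i₂ i₂ := by
  simp only [coefv, add_mul, mul_add, ite_mul, mul_ite, zero_mul, mul_zero, zero_add, add_zero,
    Finset.sum_add_distrib, Finset.sum_ite_eq', Finset.mem_univ, if_true]
  ring

end

lemma moment_transfer {N : ℕ} (μ : Measure (Fin N → ℝ)) (a : Fin N → ℝ) (V : ℝ≥0)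
    (hmap : μ.map (fun v => ∑ i, a i * v i) = gaussianReal 0 V) :
    Integrable (fun v => (∑ i, a i * v i) ^ 2) μ ∧
      ∫ v, (∑ i, a i * v i) ^ 2 ∂μ = (∫ x, x ^ 2 ∂(gaussianReal 0 1)) * V := by
  have hmeas : Measurable (fun v : Fin N → ℝ => ∑ i, a i * v i) := by
    apply Finset.measurable_sum
    intro i _
    exact (measurable_pi_apply i).const_mul _
  constructor
  · have h1 := integrable_map_measure (μ := μ) (f := fun v : Fin N → ℝ => ∑ i, a i * v i)
      (g := fun x : ℝ => x ^ 2) (by fun_prop) hmeas.aemeasurable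
    rw [hmap] at h1
    exact h1.mp (integrable_sq_gaussian V)
  · have h2 := integral_map (μ := μ) (φ := fun v : Fin N → ℝ => ∑ i, a i * v i)
      (f := fun x : ℝ => x ^ 2) hmeas.aemeasurable (by fun_prop)
    rw [hmap] at h2
    rw [← h2]
    exact integral_sq_gaussian V


end AuxICV

section Kernels
lemma fbm_Q (H p s u : ℝ) (hH0 : 0 < H) (hs : 0 < s) (hu : 0 < u) :
    u * u * kFBM H p p + u * -(u+s) * kFBM H p (p+s) + u * s * kFBM H p (p+s+u)
    + -(u+s) * u * kFBM H (p+s) p + -(u+s) * -(u+s) * kFBM H (p+s) (p+s)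
    + -(u+s) * s * kFBM H (p+s) (p+s+u)
    + s * u * kFBM H (p+s+u) p + s * -(u+s) * kFBM H (p+s+u) (p+s)
    + s * s * kFBM H (p+s+u) (p+s+u)
    = ((u + s) * u * s) * (s ^ (2*H-1) + u ^ (2*H-1) - (s+u) ^ (2*H-1)) := by
  have hsu : (0:ℝ) < s + u := by linarith
  have hsplit : ∀ z : ℝ, 0 < z → z ^ (2*H) = z ^ (2*H-1) * z := by
    intro z hz
    rw [show z ^ (2*H) = z ^ ((2*H-1) + 1) from by ring_nf, Real.rpow_add_one hz.ne']
  simp only [kFBM]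
  rw [show p - (p + s) = -s by ring, show p + s - p = s by ring,
    show p - (p + s + u) = -(s+u) by ring, show p + s + u - p = s + u by ring,
    show p + s - (p + s + u) = -u by ring, show p + s + u - (p + s) = u by ring]
  simp only [sub_self, abs_zero, abs_neg]
  rw [abs_of_pos hs, abs_of_pos hu, abs_of_pos hsu]
  rw [Real.zero_rpow (by positivity : 2*H ≠ 0)]
  rw [hsplit s hs, hsplit u hu, hsplit (s+u) hsu]
  ring

lemma ifbm_Q (H p s u : ℝ) (hH0 : 0 < H) (hs : 0 < s) (hu : 0 < u) :
    u * u * kIFBM H p p + u * -(u+s) * kIFBM H p (p+s) + u * s * kIFBM H p (p+s+u)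
    + -(u+s) * u * kIFBM H (p+s) p + -(u+s) * -(u+s) * kIFBM H (p+s) (p+s)
    + -(u+s) * s * kIFBM H (p+s) (p+s+u)
    + s * u * kIFBM H (p+s+u) p + s * -(u+s) * kIFBM H (p+s+u) (p+s)
    + s * s * kIFBM H (p+s+u) (p+s+u)
    = ((u + s) * u * s) *
        (((s+u) ^ (2*H+1) - s ^ (2*H+1) - u ^ (2*H+1)) / (2 * (2*H+1) * (H+1))) := by
  have hsu : (0:ℝ) < s + u := by linarith
  have hsplit : ∀ z : ℝ, 0 < z → z ^ (2*H+2) = z ^ (2*H+1) * z := by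
    intro z hz
    rw [show z ^ (2*H+2) = z ^ ((2*H+1) + 1) from by ring_nf, Real.rpow_add_one hz.ne']
  simp only [kIFBM]
  rw [show p - (p + s) = -s by ring, show p + s - p = s by ring,
    show p - (p + s + u) = -(s+u) by ring, show p + s + u - p = s + u by ring,
    show p + s - (p + s + u) = -u by ring, show p + s + u - (p + s) = u by ring]
  simp only [sub_self, abs_zero, abs_neg]
  rw [abs_of_pos hs, abs_of_pos hu, abs_of_pos hsu]
  rw [Real.zero_rpow (by positivity : 2*H+2 ≠ 0)]
  rw [hsplit s hs, hsplit u hu, hsplit (s+u) hsu]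
  have h1 : (2*H+1) ≠ 0 := by positivity
  have h2 : (H+1) ≠ 0 := by positivity
  field_simp
  ring


open Filter Asymptotics

lemma theta_of_bounds (f : ℕ → ℝ) (e K₁ K₂ : ℝ) (hK₁ : 0 < K₁)
    (h : ∀ N : ℕ, 3 ≤ N → K₁ * (N:ℝ) ^ e ≤ f N ∧ f N ≤ K₂ * (N:ℝ) ^ e) :
    f =Θ[Filter.atTop] fun N : ℕ => (N:ℝ) ^ e := by
  have hmain : ∀ N : ℕ, 3 ≤ N → (K₁ * (N:ℝ) ^ e ≤ f N ∧ f N ≤ K₂ * (N:ℝ) ^ e) ∧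
      (0:ℝ) < (N:ℝ) ^ e ∧ 0 < f N := by
    intro N hN
    have hNpos : (0:ℝ) < N := by exact_mod_cast (by omega : 0 < N)
    have hg := Real.rpow_pos_of_pos hNpos e
    exact ⟨h N hN, hg, lt_of_lt_of_le (by positivity) (h N hN).1⟩
  constructor
  · rw [Asymptotics.isBigO_iff]
    refine ⟨K₂, ?_⟩
    filter_upwards [Filter.eventually_ge_atTop 3] with N hN
    obtain ⟨⟨h1, h2⟩, hg, hf⟩ := hmain N hN
    rw [Real.norm_eq_abs, Real.norm_eq_abs, abs_of_pos hf, abs_of_pos hg]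
    exact h2
  · rw [Asymptotics.isBigO_iff]
    refine ⟨K₁⁻¹, ?_⟩
    filter_upwards [Filter.eventually_ge_atTop 3] with N hN
    obtain ⟨⟨h1, h2⟩, hg, hf⟩ := hmain N hN
    rw [Real.norm_eq_abs, Real.norm_eq_abs, abs_of_pos hf, abs_of_pos hg]
    calc (N:ℝ) ^ e = K₁⁻¹ * (K₁ * (N:ℝ) ^ e) := by field_simp
    _ ≤ K₁⁻¹ * f N := mul_le_mul_of_nonneg_left h1 (inv_nonneg.mpr hK₁.le)

lemma conv1 (a b e : ℝ) (hb : 0 < b) (n : ℝ) (hn : 0 < n) :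
    (a / n) * ((b / n) ^ e) = (a * b ^ e) * n ^ (-(e + 1)) := by
  have h1 := (Real.rpow_pos_of_pos hn e).ne'
  rw [Real.div_rpow hb.le hn.le, Real.rpow_neg hn.le, Real.rpow_add hn e 1, Real.rpow_one]
  field_simp

lemma conv2 (a e : ℝ) (ha : 0 ≤ a) (n : ℝ) (hn : 0 < n) :
    (a / n) ^ e = a ^ e * n ^ (-e) := by
  rw [Real.div_rpow ha hn.le, Real.rpow_neg hn.le, div_eq_mul_inv]

end Kernels

open scoped NNReal ENNReal

set_option maxHeartbeats 1600000 in
/-- If the partitions are quasi-uniform, `H ∈ (0,1)`, `l ∈ {0,1}` and `μ_N` is the Gaussian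
measure on `ℝ^N` with mean zero and covariance matrix `(k_{l,H}(x_{N,i}, x_{N,j}))_{i,j=1}^N`,
then `E σ̂_ICV²(N) = Θ(N^{1-2H})` if `l = 0` and `E σ̂_ICV²(N) = Θ(N^{-1-2H})` if `l = 1`. -/
theorem icv_expected_rate (T : ℝ) (hT : 0 < T) (pts : ℕ → ℕ → ℝ)
    (hx0 : ∀ N, pts N 0 = 0) (hxT : ∀ N, pts N N = T)
    (hmono : ∀ N, ∀ n < N, pts N n < pts N (n + 1))
    (hqu : ∃ C : ℝ, ∀ N, ∀ m < N, ∀ n < N, deltaX pts N m ≤ C * deltaX pts N n)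
    (H : ℝ) (hH0 : 0 < H) (hH1 : H < 1)
    (l : ℕ) (hl : l = 0 ∨ l = 1)
    (K : ℝ → ℝ → ℝ) (hK : K = if l = 0 then kFBM H else kIFBM H)
    (μ : (N : ℕ) → Measure (Fin N → ℝ))
    (hgauss : ∀ (N : ℕ) (a : Fin N → ℝ),
      (μ N).map (fun v => ∑ i, a i * v i) =
        gaussianReal 0 (Real.toNNReal
          (∑ i, ∑ j, a i * a j * K (pts N (i.1 + 1)) (pts N (j.1 + 1))))) :
    (l = 0 →
      (fun N => ∫ v, sigmaICVvec pts N v ∂(μ N)) =Θ[atTop]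
        fun N : ℕ => (N : ℝ) ^ (1 - 2 * H)) ∧
    (l = 1 →
      (fun N => ∫ v, sigmaICVvec pts N v ∂(μ N)) =Θ[atTop]
        fun N : ℕ => (N : ℝ) ^ (-1 - 2 * H)) := by
  obtain ⟨C, hC⟩ := hqu
  have hMpos := gaussian_M_pos
  set M := ∫ x, x ^ 2 ∂(gaussianReal 0 1) with hMdef
  have hd10 : deltaX pts 1 0 = T := by
    show pts 1 (0+1) - pts 1 0 = T
    rw [hx0]; norm_num [hxT 1]
  have hC1 : 1 ≤ C := by
    have h := hC 1 0 one_pos 0 one_pos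
    rw [hd10] at h; nlinarith
  have hCpos : (0:ℝ) < C := by linarith
  have hdpos : ∀ N, ∀ k, k < N → 0 < deltaX pts N k := fun N k hk => sub_pos.mpr (hmono N k hk)
  have hsum : ∀ N : ℕ, ∑ m ∈ Finset.range N, deltaX pts N m = T := by
    intro N
    have := Finset.sum_range_sub (fun m => pts N m) N
    simpa [deltaX, hx0 N, hxT N] using this
  have hbnd : ∀ N : ℕ, 0 < N → ∀ k, k < N →
      T / (C * N) ≤ deltaX pts N k ∧ deltaX pts N k ≤ C * T / N := by
    intro N hN k hk
    have hNR : (0:ℝ) < N := by exact_mod_cast hN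
    have hkpos := hdpos N k hk
    constructor
    · have h1 : T ≤ N * (C * deltaX pts N k) := by
        rw [← hsum N]
        calc ∑ m ∈ Finset.range N, deltaX pts N m
            ≤ ∑ m ∈ Finset.range N, C * deltaX pts N k :=
              Finset.sum_le_sum fun m hm => hC N m (Finset.mem_range.mp hm) k hk
          _ = N * (C * deltaX pts N k) := by
              rw [Finset.sum_const, Finset.card_range, nsmul_eq_mul]
      rw [div_le_iff₀ (by positivity)]
      nlinarith
    · have h1 : (N:ℝ) * (deltaX pts N k / C) ≤ T := by
        rw [← hsum N]
        calc (N:ℝ) * (deltaX pts N k / C)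
            = ∑ m ∈ Finset.range N, deltaX pts N k / C := by
              rw [Finset.sum_const, Finset.card_range, nsmul_eq_mul]
          _ ≤ ∑ m ∈ Finset.range N, deltaX pts N m := by
              refine Finset.sum_le_sum fun m hm => ?_
              rw [div_le_iff₀ hCpos]
              calc deltaX pts N k ≤ C * deltaX pts N m :=
                    hC N k hk m (Finset.mem_range.mp hm)
                _ = deltaX pts N m * C := mul_comm _ _
      rw [le_div_iff₀ hNR]
      have h2 : deltaX pts N k / C * C = deltaX pts N k := div_mul_cancel₀ _ hCpos.ne'
      nlinarith [mul_le_mul_of_nonneg_right h1 hCpos.le]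
  have hptsrec : ∀ N n : ℕ, 2 ≤ n →
      pts N n = pts N (n-1) + deltaX pts N (n-1) ∧
      pts N (n+1) = pts N (n-1) + deltaX pts N (n-1) + deltaX pts N n := by
    intro N n h2
    have he : n - 1 + 1 = n := by omega
    constructor
    · show pts N n = pts N (n-1) + (pts N ((n-1)+1) - pts N (n-1))
      rw [he]; ring
    · show pts N (n+1) = pts N (n-1) + (pts N ((n-1)+1) - pts N (n-1)) + (pts N (n+1) - pts N n)
      rw [he]; ring
  refine ⟨fun hl0 => ?_, fun hl1 => ?_⟩
  · -- l = 0 : fractional Brownian motion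
    subst hl0
    norm_num at hK
    subst hK
    -- constants
    have hc0 : (0:ℝ) < 2 ^ (1-(2*H-1)) - 1 := by
      have : (1:ℝ) < 2 ^ (1-(2*H-1)) := by
        calc (1:ℝ) = 2 ^ (0:ℝ) := by simp
        _ < 2 ^ (1-(2*H-1)) := Real.rpow_lt_rpow_of_exponent_lt one_lt_two (by linarith)
      linarith
    set K₁ : ℝ := (2 ^ (1-(2*H-1)) - 1) * ((T/C) * (2*C*T) ^ ((2*H-1)-1)) with hK₁def
    set K₂ : ℝ := 2 * ((T/C) ^ (2*H-1) + (C*T) ^ (2*H-1)) with hK₂def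
    have hK₁pos : 0 < K₁ := mul_pos hc0 (by positivity)
    have hK₂pos : 0 < K₂ := by positivity
    -- per-term bounds
    have hB : ∀ N : ℕ, 3 ≤ N → ∀ n ∈ Finset.Icc 2 (N-1),
        K₁ * (N:ℝ) ^ (1-2*H) ≤ deltaX pts N (n-1) ^ (2*H-1) + deltaX pts N n ^ (2*H-1)
            - (deltaX pts N (n-1) + deltaX pts N n) ^ (2*H-1) ∧
          deltaX pts N (n-1) ^ (2*H-1) + deltaX pts N n ^ (2*H-1)
            - (deltaX pts N (n-1) + deltaX pts N n) ^ (2*H-1) ≤ K₂ * (N:ℝ) ^ (1-2*H) := by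
      intro N h3 n hn
      obtain ⟨hn2, hn1⟩ := Finset.mem_Icc.mp hn
      have hnN : n < N := by omega
      have hn1N : n - 1 < N := by omega
      have hN0 : 0 < N := by omega
      have hNR : (0:ℝ) < N := by exact_mod_cast hN0
      obtain ⟨hs1, hs2⟩ := hbnd N hN0 (n-1) hn1N
      obtain ⟨hu1, hu2⟩ := hbnd N hN0 n hnN
      have hminpos : (0:ℝ) < T/(C*N) := by positivity
      constructor
      · refine le_trans (le_of_eq ?_) (bracket0_lb (by linarith) hminpos hs1 hu1 hs2 hu2)
        have hcv := conv1 (T/C) (2*C*T) ((2*H-1)-1) (by positivity) (N:ℝ) hNR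
        rw [show (-((2*H-1-1)+1)) = 1-2*H by ring] at hcv
        rw [show T/(C*(N:ℝ)) = (T/C)/N by ring, show 2*(C*T/(N:ℝ)) = (2*C*T)/N by ring, hK₁def]
        linear_combination (1 - (2:ℝ) ^ (1-(2*H-1))) * hcv
      · refine le_trans (bracket0_ub hminpos hs1 hu1 hs2 hu2) (le_of_eq ?_)
        have hcva := conv2 (T/C) (2*H-1) (by positivity) (N:ℝ) hNR
        have hcvb := conv2 (C*T) (2*H-1) (by positivity) (N:ℝ) hNR
        rw [show (-(2*H-1)) = 1-2*H by ring] at hcva hcvb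
        rw [show T/(C*(N:ℝ)) = (T/C)/N by ring, show C*T/(N:ℝ) = (C*T)/N by ring, hK₂def]
        linear_combination 2 * hcva + 2 * hcvb
    -- the integral formula
    have hint : ∀ N : ℕ, 3 ≤ N → (∫ v, sigmaICVvec pts N v ∂ μ N)
        = (M/(N:ℝ)) * ∑ n ∈ Finset.Icc 2 (N-1),
            (deltaX pts N (n-1) ^ (2*H-1) + deltaX pts N n ^ (2*H-1)
              - (deltaX pts N (n-1) + deltaX pts N n) ^ (2*H-1)) := by
      intro N h3
      have hterm : ∀ n ∈ Finset.Icc 2 (N-1),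
          Integrable (fun v => (deltaX pts N (n - 1) * (vecExt N v (n + 1) - vecExt N v n) -
              deltaX pts N n * (vecExt N v n - vecExt N v (n - 1))) ^ 2 /
            ((deltaX pts N n + deltaX pts N (n - 1)) * deltaX pts N n * deltaX pts N (n - 1)))
            (μ N)
          ∧ (∫ v, (deltaX pts N (n - 1) * (vecExt N v (n + 1) - vecExt N v n) -
              deltaX pts N n * (vecExt N v n - vecExt N v (n - 1))) ^ 2 /
            ((deltaX pts N n + deltaX pts N (n - 1)) * deltaX pts N n * deltaX pts N (n - 1))
              ∂ μ N)
            = M * (deltaX pts N (n-1) ^ (2*H-1) + deltaX pts N n ^ (2*H-1)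
              - (deltaX pts N (n-1) + deltaX pts N n) ^ (2*H-1)) := by
        intro n hn
        obtain ⟨hn2, hn1⟩ := Finset.mem_Icc.mp hn
        have hnN : n < N := by omega
        have hn1N : n - 1 < N := by omega
        have hN0 : 0 < N := by omega
        have hNR : (0:ℝ) < N := by exact_mod_cast hN0
        have hs := hdpos N (n-1) hn1N
        have hu := hdpos N n hnN
        set s := deltaX pts N (n-1) with hsdef
        set u := deltaX pts N n with hudef
        have hfun : ∀ v : Fin N → ℝ,
            s * (vecExt N v (n + 1) - vecExt N v n) - u * (vecExt N v n - vecExt N v (n - 1))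
            = ∑ i, coefv (⟨n-1-1, by omega⟩ : Fin N) ⟨n-1, by omega⟩ ⟨n+1-1, by omega⟩
                u (-(u+s)) s i * v i := by
          intro v
          rw [coefv_sum]
          have e1 : vecExt N v (n+1) = v ⟨n+1-1, by omega⟩ := by
            simp only [vecExt]
            rw [dif_pos (show 1 ≤ n+1 ∧ n+1 ≤ N by omega)]
          have e2 : vecExt N v n = v ⟨n-1, by omega⟩ := by
            simp only [vecExt]
            rw [dif_pos (show 1 ≤ n ∧ n ≤ N by omega)]
          have e3 : vecExt N v (n-1) = v ⟨n-1-1, by omega⟩ := by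
            simp only [vecExt]
            rw [dif_pos (show 1 ≤ n-1 ∧ n-1 ≤ N by omega)]
          rw [e1, e2, e3]
          ring
        have hmap := hgauss N (coefv (⟨n-1-1, by omega⟩ : Fin N) ⟨n-1, by omega⟩
          ⟨n+1-1, by omega⟩ u (-(u+s)) s)
        have hQ : (∑ i, ∑ j, coefv (⟨n-1-1, by omega⟩ : Fin N) ⟨n-1, by omega⟩
              ⟨n+1-1, by omega⟩ u (-(u+s)) s i *
              coefv (⟨n-1-1, by omega⟩ : Fin N) ⟨n-1, by omega⟩ ⟨n+1-1, by omega⟩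
              u (-(u+s)) s j * kFBM H (pts N (i.1 + 1)) (pts N (j.1 + 1)))
            = ((u + s) * u * s) * (s ^ (2*H-1) + u ^ (2*H-1) - (s+u) ^ (2*H-1)) := by
          rw [coefv_quadform _ _ _ _ _ _ (fun i j => kFBM H (pts N (i.1 + 1)) (pts N (j.1 + 1)))]
          simp only [Fin.val_mk]
          rw [show n-1-1+1 = n-1 from by omega, show n-1+1 = n from by omega,
            show n+1-1+1 = n+1 from by omega]
          obtain ⟨hp1, hp2⟩ := hptsrec N n hn2
          rw [← hsdef] at hp1
          rw [← hsdef, ← hudef] at hp2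
          rw [hp1, hp2]
          exact fbm_Q H (pts N (n-1)) s u hH0 hs hu
        rw [hQ] at hmap
        obtain ⟨hInt, hVal⟩ := moment_transfer (μ N) _ _ hmap
        have hBnn : 0 ≤ s ^ (2*H-1) + u ^ (2*H-1) - (s+u) ^ (2*H-1) := by
          have h := (hB N h3 n hn).1
          have : (0:ℝ) ≤ K₁ * (N:ℝ) ^ (1-2*H) := by positivity
          linarith
        have hcoe : ((Real.toNNReal (((u + s) * u * s) *
            (s ^ (2*H-1) + u ^ (2*H-1) - (s+u) ^ (2*H-1))) : ℝ≥0) : ℝ)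
            = ((u + s) * u * s) * (s ^ (2*H-1) + u ^ (2*H-1) - (s+u) ^ (2*H-1)) :=
          Real.coe_toNNReal _ (mul_nonneg (by positivity) hBnn)
        rw [hcoe] at hVal
        have hD : ((u + s) * u * s) ≠ 0 := by positivity
        constructor
        · simp only [hfun]
          exact hInt.div_const _
        · simp only [hfun]
          rw [integral_div, hVal, mul_div_assoc, mul_div_cancel_left₀ _ hD]
      calc (∫ v, sigmaICVvec pts N v ∂ μ N)
          = ∫ v, (1 / (N : ℝ)) * ∑ n ∈ Finset.Icc 2 (N - 1),
              (deltaX pts N (n - 1) * (vecExt N v (n + 1) - vecExt N v n) -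
                deltaX pts N n * (vecExt N v n - vecExt N v (n - 1))) ^ 2 /
              ((deltaX pts N n + deltaX pts N (n - 1)) * deltaX pts N n * deltaX pts N (n - 1))
              ∂ μ N := rfl
        _ = (1 / (N : ℝ)) * ∫ v, ∑ n ∈ Finset.Icc 2 (N - 1),
              (deltaX pts N (n - 1) * (vecExt N v (n + 1) - vecExt N v n) -
                deltaX pts N n * (vecExt N v n - vecExt N v (n - 1))) ^ 2 /
              ((deltaX pts N n + deltaX pts N (n - 1)) * deltaX pts N n * deltaX pts N (n - 1))
              ∂ μ N := by rw [integral_const_mul]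
        _ = (1 / (N : ℝ)) * ∑ n ∈ Finset.Icc 2 (N - 1), ∫ v,
              (deltaX pts N (n - 1) * (vecExt N v (n + 1) - vecExt N v n) -
                deltaX pts N n * (vecExt N v n - vecExt N v (n - 1))) ^ 2 /
              ((deltaX pts N n + deltaX pts N (n - 1)) * deltaX pts N n * deltaX pts N (n - 1))
              ∂ μ N := by rw [integral_finset_sum _ (fun n hn => (hterm n hn).1)]
        _ = (1 / (N : ℝ)) * ∑ n ∈ Finset.Icc 2 (N - 1),
              M * (deltaX pts N (n-1) ^ (2*H-1) + deltaX pts N n ^ (2*H-1)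
                - (deltaX pts N (n-1) + deltaX pts N n) ^ (2*H-1)) := by
            rw [Finset.sum_congr rfl fun n hn => (hterm n hn).2]
        _ = (M/(N:ℝ)) * ∑ n ∈ Finset.Icc 2 (N-1),
              (deltaX pts N (n-1) ^ (2*H-1) + deltaX pts N n ^ (2*H-1)
                - (deltaX pts N (n-1) + deltaX pts N n) ^ (2*H-1)) := by
            rw [← Finset.mul_sum]
            ring
    -- conclude
    refine theta_of_bounds _ (1-2*H) (M*K₁/3) (M*K₂)
      (div_pos (mul_pos hMpos hK₁pos) (by norm_num)) ?_
    intro N h3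
    have hNR : (0:ℝ) < N := by exact_mod_cast (by omega : 0 < N)
    have hN3R : (3:ℝ) ≤ N := by exact_mod_cast h3
    have hgpos : (0:ℝ) < (N:ℝ) ^ (1-2*H) := Real.rpow_pos_of_pos hNR _
    rw [hint N h3]
    have hcard : ((Finset.Icc 2 (N-1)).card : ℝ) = (N:ℝ) - 2 := by
      rw [Nat.card_Icc]
      have : N - 1 + 1 - 2 = N - 2 := by omega
      rw [this]
      push_cast [Nat.cast_sub (by omega : 2 ≤ N)]
      ring
    have hlo : ((N:ℝ) - 2) * (K₁ * (N:ℝ) ^ (1-2*H)) ≤ ∑ n ∈ Finset.Icc 2 (N-1),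
        (deltaX pts N (n-1) ^ (2*H-1) + deltaX pts N n ^ (2*H-1)
          - (deltaX pts N (n-1) + deltaX pts N n) ^ (2*H-1)) := by
      have := Finset.sum_le_sum (fun n hn => (hB N h3 n hn).1)
      rwa [Finset.sum_const, nsmul_eq_mul, hcard] at this
    have hhi : (∑ n ∈ Finset.Icc 2 (N-1),
        (deltaX pts N (n-1) ^ (2*H-1) + deltaX pts N n ^ (2*H-1)
          - (deltaX pts N (n-1) + deltaX pts N n) ^ (2*H-1)))
        ≤ ((N:ℝ) - 2) * (K₂ * (N:ℝ) ^ (1-2*H)) := by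
      have := Finset.sum_le_sum (fun n hn => (hB N h3 n hn).2)
      rwa [Finset.sum_const, nsmul_eq_mul, hcard] at this
    constructor
    · calc M*K₁/3 * (N:ℝ) ^ (1-2*H)
          ≤ (M/N) * (((N:ℝ) - 2) * (K₁ * (N:ℝ) ^ (1-2*H))) := by
            rw [div_mul_eq_mul_div, div_mul_eq_mul_div, div_le_div_iff₀ (by norm_num) hNR]
            nlinarith [mul_nonneg (mul_pos (mul_pos hMpos hK₁pos) hgpos).le
              (show (0:ℝ) ≤ 2*(N:ℝ)-6 by linarith)]
        _ ≤ (M/N) * ∑ n ∈ Finset.Icc 2 (N-1),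
              (deltaX pts N (n-1) ^ (2*H-1) + deltaX pts N n ^ (2*H-1)
                - (deltaX pts N (n-1) + deltaX pts N n) ^ (2*H-1)) :=
            mul_le_mul_of_nonneg_left hlo (by positivity)
    · calc (M/N) * ∑ n ∈ Finset.Icc 2 (N-1),
              (deltaX pts N (n-1) ^ (2*H-1) + deltaX pts N n ^ (2*H-1)
                - (deltaX pts N (n-1) + deltaX pts N n) ^ (2*H-1))
          ≤ (M/N) * (((N:ℝ) - 2) * (K₂ * (N:ℝ) ^ (1-2*H))) :=
            mul_le_mul_of_nonneg_left hhi (by positivity)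
        _ ≤ M*K₂ * (N:ℝ) ^ (1-2*H) := by
            rw [div_mul_eq_mul_div, div_le_iff₀ hNR]
            nlinarith [mul_nonneg (mul_pos (mul_pos hMpos hK₂pos) hgpos).le
              (show (0:ℝ) ≤ 2 by norm_num)]
  · -- l = 1 : integrated fractional Brownian motion
    subst hl1
    norm_num at hK
    subst hK
    have hc0 : (0:ℝ) < 1 - 2 ^ (1-(2*H+1)) := by
      have : (2:ℝ) ^ (1-(2*H+1)) < 1 := by
        calc (2:ℝ) ^ (1-(2*H+1)) < 2 ^ (0:ℝ) :=
          Real.rpow_lt_rpow_of_exponent_lt one_lt_two (by linarith)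
        _ = 1 := by simp
      linarith
    have hcH : (0:ℝ) < 2*(2*H+1)*(H+1) := by positivity
    set K₁ : ℝ := (1 - 2 ^ (1-(2*H+1))) * ((T/C) * (2*(T/C)) ^ ((2*H+1)-1)) / (2*(2*H+1)*(H+1))
      with hK₁def
    set K₂ : ℝ := (2*(C*T)) ^ (2*H+1) / (2*(2*H+1)*(H+1)) with hK₂def
    have hK₁pos : 0 < K₁ := div_pos (mul_pos hc0 (by positivity)) hcH
    have hK₂pos : 0 < K₂ := div_pos (by positivity) hcH
    have hB : ∀ N : ℕ, 3 ≤ N → ∀ n ∈ Finset.Icc 2 (N-1),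
        K₁ * (N:ℝ) ^ (-1-2*H) ≤ ((deltaX pts N (n-1) + deltaX pts N n) ^ (2*H+1)
            - deltaX pts N (n-1) ^ (2*H+1) - deltaX pts N n ^ (2*H+1)) / (2*(2*H+1)*(H+1)) ∧
          ((deltaX pts N (n-1) + deltaX pts N n) ^ (2*H+1)
            - deltaX pts N (n-1) ^ (2*H+1) - deltaX pts N n ^ (2*H+1)) / (2*(2*H+1)*(H+1))
            ≤ K₂ * (N:ℝ) ^ (-1-2*H) := by
      intro N h3 n hn
      obtain ⟨hn2, hn1⟩ := Finset.mem_Icc.mp hn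
      have hnN : n < N := by omega
      have hn1N : n - 1 < N := by omega
      have hN0 : 0 < N := by omega
      have hNR : (0:ℝ) < N := by exact_mod_cast hN0
      obtain ⟨hs1, hs2⟩ := hbnd N hN0 (n-1) hn1N
      obtain ⟨hu1, hu2⟩ := hbnd N hN0 n hnN
      have hminpos : (0:ℝ) < T/(C*N) := by positivity
      constructor
      · have hlb := bracket1_lb (by linarith : (1:ℝ) < 2*H+1) hminpos hs1 hu1
        have hcv := conv1 (T/C) (2*(T/C)) ((2*H+1)-1) (by positivity) (N:ℝ) hNR
        rw [show (-((2*H+1-1)+1)) = -1-2*H by ring] at hcv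
        calc K₁ * (N:ℝ) ^ (-1-2*H)
            = ((1 - 2 ^ (1-(2*H+1))) * (T/(C*(N:ℝ))) * (2*(T/(C*(N:ℝ)))) ^ ((2*H+1)-1))
                / (2*(2*H+1)*(H+1)) := by
              rw [show T/(C*(N:ℝ)) = T/C/N by ring, hK₁def]
              rw [show 2*(T/C/(N:ℝ)) = (2*(T/C))/N by ring]
              linear_combination (((2:ℝ) ^ (1-(2*H+1)) - 1) / (2*(2*H+1)*(H+1))) * hcv
          _ ≤ ((deltaX pts N (n-1) + deltaX pts N n) ^ (2*H+1)
                - deltaX pts N (n-1) ^ (2*H+1) - deltaX pts N n ^ (2*H+1)) / (2*(2*H+1)*(H+1)) := by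
              gcongr
      · have hub := bracket1_ub (by linarith : (0:ℝ) ≤ 2*H+1)
          (le_trans hminpos.le hs1) (le_trans hminpos.le hu1) hs2 hu2
        have hcv2 := conv2 (2*(C*T)) (2*H+1) (by positivity) (N:ℝ) hNR
        rw [show (-(2*H+1)) = -1-2*H by ring] at hcv2
        calc ((deltaX pts N (n-1) + deltaX pts N n) ^ (2*H+1)
              - deltaX pts N (n-1) ^ (2*H+1) - deltaX pts N n ^ (2*H+1)) / (2*(2*H+1)*(H+1))
            ≤ ((2*(C*T/(N:ℝ))) ^ (2*H+1)) / (2*(2*H+1)*(H+1)) := by gcongr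
          _ = K₂ * (N:ℝ) ^ (-1-2*H) := by
              rw [show 2*(C*T/(N:ℝ)) = (2*(C*T))/N by ring, hcv2, hK₂def]
              ring
    have hint : ∀ N : ℕ, 3 ≤ N → (∫ v, sigmaICVvec pts N v ∂ μ N)
        = (M/(N:ℝ)) * ∑ n ∈ Finset.Icc 2 (N-1),
            (((deltaX pts N (n-1) + deltaX pts N n) ^ (2*H+1)
              - deltaX pts N (n-1) ^ (2*H+1) - deltaX pts N n ^ (2*H+1)) / (2*(2*H+1)*(H+1))) := by
      intro N h3
      have hterm : ∀ n ∈ Finset.Icc 2 (N-1),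
          Integrable (fun v => (deltaX pts N (n - 1) * (vecExt N v (n + 1) - vecExt N v n) -
              deltaX pts N n * (vecExt N v n - vecExt N v (n - 1))) ^ 2 /
            ((deltaX pts N n + deltaX pts N (n - 1)) * deltaX pts N n * deltaX pts N (n - 1)))
            (μ N)
          ∧ (∫ v, (deltaX pts N (n - 1) * (vecExt N v (n + 1) - vecExt N v n) -
              deltaX pts N n * (vecExt N v n - vecExt N v (n - 1))) ^ 2 /
            ((deltaX pts N n + deltaX pts N (n - 1)) * deltaX pts N n * deltaX pts N (n - 1))
              ∂ μ N)
            = M * (((deltaX pts N (n-1) + deltaX pts N n) ^ (2*H+1)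
              - deltaX pts N (n-1) ^ (2*H+1) - deltaX pts N n ^ (2*H+1)) / (2*(2*H+1)*(H+1))) := by
        intro n hn
        obtain ⟨hn2, hn1⟩ := Finset.mem_Icc.mp hn
        have hnN : n < N := by omega
        have hn1N : n - 1 < N := by omega
        have hN0 : 0 < N := by omega
        have hNR : (0:ℝ) < N := by exact_mod_cast hN0
        have hs := hdpos N (n-1) hn1N
        have hu := hdpos N n hnN
        set s := deltaX pts N (n-1) with hsdef
        set u := deltaX pts N n with hudef
        have hfun : ∀ v : Fin N → ℝ,
            s * (vecExt N v (n + 1) - vecExt N v n) - u * (vecExt N v n - vecExt N v (n - 1))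
            = ∑ i, coefv (⟨n-1-1, by omega⟩ : Fin N) ⟨n-1, by omega⟩ ⟨n+1-1, by omega⟩
                u (-(u+s)) s i * v i := by
          intro v
          rw [coefv_sum]
          have e1 : vecExt N v (n+1) = v ⟨n+1-1, by omega⟩ := by
            simp only [vecExt]
            rw [dif_pos (show 1 ≤ n+1 ∧ n+1 ≤ N by omega)]
          have e2 : vecExt N v n = v ⟨n-1, by omega⟩ := by
            simp only [vecExt]
            rw [dif_pos (show 1 ≤ n ∧ n ≤ N by omega)]
          have e3 : vecExt N v (n-1) = v ⟨n-1-1, by omega⟩ := by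
            simp only [vecExt]
            rw [dif_pos (show 1 ≤ n-1 ∧ n-1 ≤ N by omega)]
          rw [e1, e2, e3]
          ring
        have hmap := hgauss N (coefv (⟨n-1-1, by omega⟩ : Fin N) ⟨n-1, by omega⟩
          ⟨n+1-1, by omega⟩ u (-(u+s)) s)
        have hQ : (∑ i, ∑ j, coefv (⟨n-1-1, by omega⟩ : Fin N) ⟨n-1, by omega⟩
              ⟨n+1-1, by omega⟩ u (-(u+s)) s i *
              coefv (⟨n-1-1, by omega⟩ : Fin N) ⟨n-1, by omega⟩ ⟨n+1-1, by omega⟩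
              u (-(u+s)) s j * kIFBM H (pts N (i.1 + 1)) (pts N (j.1 + 1)))
            = ((u + s) * u * s) *
                (((s+u) ^ (2*H+1) - s ^ (2*H+1) - u ^ (2*H+1)) / (2*(2*H+1)*(H+1))) := by
          rw [coefv_quadform _ _ _ _ _ _ (fun i j => kIFBM H (pts N (i.1 + 1)) (pts N (j.1 + 1)))]
          simp only [Fin.val_mk]
          rw [show n-1-1+1 = n-1 from by omega, show n-1+1 = n from by omega,
            show n+1-1+1 = n+1 from by omega]
          obtain ⟨hp1, hp2⟩ := hptsrec N n hn2
          rw [← hsdef] at hp1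
          rw [← hsdef, ← hudef] at hp2
          rw [hp1, hp2]
          exact ifbm_Q H (pts N (n-1)) s u hH0 hs hu
        rw [hQ] at hmap
        obtain ⟨hInt, hVal⟩ := moment_transfer (μ N) _ _ hmap
        have hBnn : 0 ≤ ((s+u) ^ (2*H+1) - s ^ (2*H+1) - u ^ (2*H+1)) / (2*(2*H+1)*(H+1)) := by
          have h := (hB N h3 n hn).1
          have h2 : (0:ℝ) ≤ K₁ * (N:ℝ) ^ (-1-2*H) := by positivity
          linarith
        have hcoe : ((Real.toNNReal (((u + s) * u * s) *
            (((s+u) ^ (2*H+1) - s ^ (2*H+1) - u ^ (2*H+1)) / (2*(2*H+1)*(H+1)))) : ℝ≥0) : ℝ)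
            = ((u + s) * u * s) *
              (((s+u) ^ (2*H+1) - s ^ (2*H+1) - u ^ (2*H+1)) / (2*(2*H+1)*(H+1))) :=
          Real.coe_toNNReal _ (mul_nonneg (by positivity) hBnn)
        rw [hcoe] at hVal
        have hD : ((u + s) * u * s) ≠ 0 := by positivity
        constructor
        · simp only [hfun]
          exact hInt.div_const _
        · simp only [hfun]
          rw [integral_div, hVal, mul_div_assoc, mul_div_cancel_left₀ _ hD]
      calc (∫ v, sigmaICVvec pts N v ∂ μ N)
          = ∫ v, (1 / (N : ℝ)) * ∑ n ∈ Finset.Icc 2 (N - 1),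
              (deltaX pts N (n - 1) * (vecExt N v (n + 1) - vecExt N v n) -
                deltaX pts N n * (vecExt N v n - vecExt N v (n - 1))) ^ 2 /
              ((deltaX pts N n + deltaX pts N (n - 1)) * deltaX pts N n * deltaX pts N (n - 1))
              ∂ μ N := rfl
        _ = (1 / (N : ℝ)) * ∫ v, ∑ n ∈ Finset.Icc 2 (N - 1),
              (deltaX pts N (n - 1) * (vecExt N v (n + 1) - vecExt N v n) -
                deltaX pts N n * (vecExt N v n - vecExt N v (n - 1))) ^ 2 /
              ((deltaX pts N n + deltaX pts N (n - 1)) * deltaX pts N n * deltaX pts N (n - 1))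
              ∂ μ N := by rw [integral_const_mul]
        _ = (1 / (N : ℝ)) * ∑ n ∈ Finset.Icc 2 (N - 1), ∫ v,
              (deltaX pts N (n - 1) * (vecExt N v (n + 1) - vecExt N v n) -
                deltaX pts N n * (vecExt N v n - vecExt N v (n - 1))) ^ 2 /
              ((deltaX pts N n + deltaX pts N (n - 1)) * deltaX pts N n * deltaX pts N (n - 1))
              ∂ μ N := by rw [integral_finset_sum _ (fun n hn => (hterm n hn).1)]
        _ = (1 / (N : ℝ)) * ∑ n ∈ Finset.Icc 2 (N - 1),
              M * (((deltaX pts N (n-1) + deltaX pts N n) ^ (2*H+1)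
                - deltaX pts N (n-1) ^ (2*H+1) - deltaX pts N n ^ (2*H+1)) / (2*(2*H+1)*(H+1))) := by
            rw [Finset.sum_congr rfl fun n hn => (hterm n hn).2]
        _ = (M/(N:ℝ)) * ∑ n ∈ Finset.Icc 2 (N-1),
              (((deltaX pts N (n-1) + deltaX pts N n) ^ (2*H+1)
                - deltaX pts N (n-1) ^ (2*H+1) - deltaX pts N n ^ (2*H+1)) / (2*(2*H+1)*(H+1))) := by
            rw [← Finset.mul_sum]
            ring
    refine theta_of_bounds _ (-1-2*H) (M*K₁/3) (M*K₂)
      (div_pos (mul_pos hMpos hK₁pos) (by norm_num)) ?_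
    intro N h3
    have hNR : (0:ℝ) < N := by exact_mod_cast (by omega : 0 < N)
    have hN3R : (3:ℝ) ≤ N := by exact_mod_cast h3
    have hgpos : (0:ℝ) < (N:ℝ) ^ (-1-2*H) := Real.rpow_pos_of_pos hNR _
    rw [hint N h3]
    have hcard : ((Finset.Icc 2 (N-1)).card : ℝ) = (N:ℝ) - 2 := by
      rw [Nat.card_Icc]
      have : N - 1 + 1 - 2 = N - 2 := by omega
      rw [this]
      push_cast [Nat.cast_sub (by omega : 2 ≤ N)]
      ring
    have hlo : ((N:ℝ) - 2) * (K₁ * (N:ℝ) ^ (-1-2*H)) ≤ ∑ n ∈ Finset.Icc 2 (N-1),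
        (((deltaX pts N (n-1) + deltaX pts N n) ^ (2*H+1)
          - deltaX pts N (n-1) ^ (2*H+1) - deltaX pts N n ^ (2*H+1)) / (2*(2*H+1)*(H+1))) := by
      have := Finset.sum_le_sum (fun n hn => (hB N h3 n hn).1)
      rwa [Finset.sum_const, nsmul_eq_mul, hcard] at this
    have hhi : (∑ n ∈ Finset.Icc 2 (N-1),
        (((deltaX pts N (n-1) + deltaX pts N n) ^ (2*H+1)
          - deltaX pts N (n-1) ^ (2*H+1) - deltaX pts N n ^ (2*H+1)) / (2*(2*H+1)*(H+1))))
        ≤ ((N:ℝ) - 2) * (K₂ * (N:ℝ) ^ (-1-2*H)) := by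
      have := Finset.sum_le_sum (fun n hn => (hB N h3 n hn).2)
      rwa [Finset.sum_const, nsmul_eq_mul, hcard] at this
    constructor
    · calc M*K₁/3 * (N:ℝ) ^ (-1-2*H)
          ≤ (M/N) * (((N:ℝ) - 2) * (K₁ * (N:ℝ) ^ (-1-2*H))) := by
            rw [div_mul_eq_mul_div, div_mul_eq_mul_div, div_le_div_iff₀ (by norm_num) hNR]
            nlinarith [mul_nonneg (mul_pos (mul_pos hMpos hK₁pos) hgpos).le
              (show (0:ℝ) ≤ 2*(N:ℝ)-6 by linarith)]
        _ ≤ (M/N) * ∑ n ∈ Finset.Icc 2 (N-1),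
              (((deltaX pts N (n-1) + deltaX pts N n) ^ (2*H+1)
                - deltaX pts N (n-1) ^ (2*H+1) - deltaX pts N n ^ (2*H+1)) / (2*(2*H+1)*(H+1))) :=
            mul_le_mul_of_nonneg_left hlo (by positivity)
    · calc (M/N) * ∑ n ∈ Finset.Icc 2 (N-1),
              (((deltaX pts N (n-1) + deltaX pts N n) ^ (2*H+1)
                - deltaX pts N (n-1) ^ (2*H+1) - deltaX pts N n ^ (2*H+1)) / (2*(2*H+1)*(H+1)))
          ≤ (M/N) * (((N:ℝ) - 2) * (K₂ * (N:ℝ) ^ (-1-2*H))) :=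
            mul_le_mul_of_nonneg_left hhi (by positivity)
        _ ≤ M*K₂ * (N:ℝ) ^ (-1-2*H) := by
            rw [div_mul_eq_mul_div, div_le_iff₀ hNR]
            nlinarith [mul_nonneg (mul_pos (mul_pos hMpos hK₂pos) hgpos).le
              (show (0:ℝ) ≤ 2 by norm_num)]
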